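/- Let 1 ≤ m ≤ n, let π be an m×n partial permutation matrix of maximal rank (π πᵀ = I_m), and let s, t be invertible diagonal m×m complex matrices such that the m products s_{ii} t_{ii} are pairwise distinct. Suppose A_- is a strictly lower triangular m×m complex matrix and A_+ is a strictly upper triangular n×n complex matrix satisfying A_- s π − s π A_+ = 0 and A_+ πᵀ t − πᵀ t A_- = 0. Then A_- = 0, π A_+ = 0 and A_+ πᵀ = 0; consequently the complex vector space of such pairs (A_-, A_+) has dimension (n−m)(n−m−1)/2. -/

import Mathlib

open Matrix


lemma sum01 {α : Type*} [Fintype α] (f : α → ℂ) (hf : ∀ j, f j = 0 ∨ f j = 1) :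
    ∑ j, f j = ((Finset.univ.filter (fun j => f j = 1)).card : ℂ) := by
  classical
  rw [Finset.card_filter, Nat.cast_sum]
  refine Finset.sum_congr rfl fun j _ => ?_
  rcases hf j with h | h <;> simp [h]

lemma perm_struct {m n : ℕ} (π : Matrix (Fin m) (Fin n) ℂ)
    (hπ01 : ∀ i j, π i j = 0 ∨ π i j = 1) (hπ : π * πᵀ = 1) :
    ∃ c : Fin m → Fin n, Function.Injective c ∧ ∀ i j, π i j = if j = c i then 1 else 0 := by
  classical
  have hrow : ∀ i, (Finset.univ.filter (fun j => π i j = 1)).card = 1 := by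
    intro i
    have h := congrFun (congrFun hπ i) i
    rw [Matrix.mul_apply] at h
    simp only [Matrix.transpose_apply, Matrix.one_apply_eq] at h
    have h2 : ∀ j, π i j * π i j = π i j := by
      intro j; rcases hπ01 i j with h' | h' <;> simp [h']
    rw [Finset.sum_congr rfl (fun j _ => h2 j), sum01 _ (hπ01 i)] at h
    exact_mod_cast h
  have horth : ∀ i i', i ≠ i' → ∀ j, π i j = 1 → π i' j = 1 → False := by
    intro i i' hne j hj hj'
    have h := congrFun (congrFun hπ i) i'
    rw [Matrix.mul_apply] at h
    simp only [Matrix.transpose_apply, Matrix.one_apply_ne hne] at h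
    have h2 : ∀ l, π i l * π i' l = 0 ∨ π i l * π i' l = 1 := by
      intro l; rcases hπ01 i l with h' | h' <;> rcases hπ01 i' l with h'' | h'' <;> simp [h', h'']
    rw [sum01 _ h2] at h
    have hmem : j ∈ Finset.univ.filter (fun l => π i l * π i' l = 1) := by
      simp [hj, hj']
    have : (Finset.univ.filter (fun l => π i l * π i' l = 1)).card = 0 := by exact_mod_cast h
    rw [Finset.card_eq_zero] at this
    simp [this] at hmem
  choose c hc using fun i => Finset.card_eq_one.mp (hrow i)
  have hc1 : ∀ i, π i (c i) = 1 := by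
    intro i
    have : c i ∈ Finset.univ.filter (fun j => π i j = 1) := by rw [hc i]; simp
    simpa using this
  refine ⟨c, ?_, ?_⟩
  · intro i i' h
    by_contra hne
    exact horth i i' hne (c i) (hc1 i) (h ▸ hc1 i')
  · intro i j
    by_cases h : j = c i
    · subst h; simp [hc1 i]
    · have : j ∉ Finset.univ.filter (fun j => π i j = 1) := by rw [hc i]; simpa using h
      simp only [Finset.mem_filter, Finset.mem_univ, true_and] at this
      rcases hπ01 i j with h' | h'
      · simp [h', h]
      · exact absurd h' this


lemma stab_vanish {m n : ℕ}
    (π : Matrix (Fin m) (Fin n) ℂ)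
    (hπ : π * πᵀ = 1)
    (s t : Fin m → ℂ) (hs : ∀ i, s i ≠ 0) (ht : ∀ i, t i ≠ 0)
    (hdist : ∀ i i' : Fin m, i ≠ i' → s i * t i ≠ s i' * t i')
    (Am : Matrix (Fin m) (Fin m) ℂ) (An : Matrix (Fin n) (Fin n) ℂ)
    (hAm : ∀ i j : Fin m, i ≤ j → Am i j = 0)
    (h1 : Am * (Matrix.diagonal s * π) = (Matrix.diagonal s * π) * An)
    (h2 : An * (πᵀ * Matrix.diagonal t) = (πᵀ * Matrix.diagonal t) * Am) :
    Am = 0 ∧ π * An = 0 ∧ An * πᵀ = 0 := by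
  have hmid : (Matrix.diagonal s * π) * (πᵀ * Matrix.diagonal t) = Matrix.diagonal (s * t) := by
    rw [Matrix.mul_assoc, ← Matrix.mul_assoc π, hπ, one_mul, Matrix.diagonal_mul_diagonal]; rfl
  have hcomm : Am * Matrix.diagonal (s * t) = Matrix.diagonal (s * t) * Am := by
    calc Am * Matrix.diagonal (s * t)
        = Am * ((Matrix.diagonal s * π) * (πᵀ * Matrix.diagonal t)) := by rw [hmid]
      _ = (Am * (Matrix.diagonal s * π)) * (πᵀ * Matrix.diagonal t) := by simp only [Matrix.mul_assoc]
      _ = ((Matrix.diagonal s * π) * An) * (πᵀ * Matrix.diagonal t) := by rw [h1]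
      _ = (Matrix.diagonal s * π) * (An * (πᵀ * Matrix.diagonal t)) := by simp only [Matrix.mul_assoc]
      _ = (Matrix.diagonal s * π) * ((πᵀ * Matrix.diagonal t) * Am) := by rw [h2]
      _ = ((Matrix.diagonal s * π) * (πᵀ * Matrix.diagonal t)) * Am := by simp only [Matrix.mul_assoc]
      _ = Matrix.diagonal (s * t) * Am := by rw [hmid]
  have hAm0 : Am = 0 := by
    ext i j
    simp only [Matrix.zero_apply]
    rcases le_or_gt i j with h | h
    · exact hAm i j h
    · have hij : i ≠ j := h.ne'
      have he := congrFun (congrFun hcomm i) j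
      rw [Matrix.mul_diagonal, Matrix.diagonal_mul] at he
      by_contra hz
      have hx : Am i j * ((s * t) j) = Am i j * ((s * t) i) := by rw [he, mul_comm]
      exact hdist j i hij.symm (by simpa using mul_left_cancel₀ hz hx)
  subst hAm0
  constructor
  · rfl
  have h1' : (Matrix.diagonal s * π) * An = 0 := by rw [← h1, Matrix.zero_mul]
  have h2' : An * (πᵀ * Matrix.diagonal t) = 0 := by rw [h2, Matrix.mul_zero]
  rw [Matrix.mul_assoc] at h1'
  rw [← Matrix.mul_assoc] at h2'
  constructor
  · ext k j
    have h := congrFun (congrFun h1' k) j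
    rw [Matrix.diagonal_mul] at h
    simpa using (mul_eq_zero.mp h).resolve_left (hs k)
  · ext i k
    have h := congrFun (congrFun h2' i) k
    rw [Matrix.mul_diagonal] at h
    simpa using (mul_eq_zero.mp h).resolve_right (ht k)


lemma card_lt_pairs {α : Type*} [LinearOrder α] [DecidableEq α] (s : Finset α) :
    ((s ×ˢ s).filter fun p => p.1 < p.2).card = s.card * (s.card - 1) / 2 := by
  have hswap : ((s ×ˢ s).filter fun p => p.2 < p.1).card
      = ((s ×ˢ s).filter fun p => p.1 < p.2).card := by
    apply Finset.card_bij (fun p _ => Prod.swap p)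
    · rintro ⟨a, b⟩ hp
      simp only [Finset.mem_filter, Finset.mem_product] at hp ⊢
      exact ⟨⟨hp.1.2, hp.1.1⟩, hp.2⟩
    · rintro ⟨a, b⟩ _ ⟨a', b'⟩ _ h
      simp only [Prod.ext_iff, Prod.swap_prod_mk] at h
      exact Prod.ext h.2 h.1
    · rintro ⟨a, b⟩ hp
      refine ⟨⟨b, a⟩, ?_, rfl⟩
      simp only [Finset.mem_filter, Finset.mem_product] at hp ⊢
      exact ⟨⟨hp.1.2, hp.1.1⟩, hp.2⟩
  have hdisj : Disjoint ((s ×ˢ s).filter fun p => p.1 < p.2)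
      ((s ×ˢ s).filter fun p => p.2 < p.1) := by
    rw [Finset.disjoint_left]
    rintro p hp hq
    simp only [Finset.mem_filter] at hp hq
    exact absurd hq.2 (asymm hp.2)
  have hunion : ((s ×ˢ s).filter fun p => p.1 < p.2) ∪ ((s ×ˢ s).filter fun p => p.2 < p.1)
      = s.offDiag := by
    rw [← Finset.filter_or]
    ext p
    simp only [Finset.mem_filter, Finset.mem_product, Finset.mem_offDiag, lt_or_lt_iff_ne]
    tauto
  have hcard := Finset.card_union_of_disjoint hdisj
  rw [hunion, Finset.offDiag_card, hswap] at hcard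
  have hk : s.card * (s.card - 1) = s.card * s.card - s.card := by
    rw [Nat.mul_sub_one]
  rw [hk]
  omega


/-- The space of pairs `(A_-, A_+)` of a strictly lower triangular `m×m` matrix and a strictly
upper triangular `n×n` matrix satisfying `A_- sπ = sπ A_+` and `A_+ πᵀt = πᵀt A_-`. -/
noncomputable def stabSpace (m n : ℕ) (π : Matrix (Fin m) (Fin n) ℂ) (s t : Fin m → ℂ) :
    Submodule ℂ (Matrix (Fin m) (Fin m) ℂ × Matrix (Fin n) (Fin n) ℂ) where
  carrier := { A | (∀ i j : Fin m, i ≤ j → A.1 i j = 0) ∧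
      (∀ i j : Fin n, j ≤ i → A.2 i j = 0) ∧
      A.1 * (Matrix.diagonal s * π) = (Matrix.diagonal s * π) * A.2 ∧
      A.2 * (πᵀ * Matrix.diagonal t) = (πᵀ * Matrix.diagonal t) * A.1 }
  add_mem' := by
    rintro a b ⟨ha1, ha2, ha3, ha4⟩ ⟨hb1, hb2, hb3, hb4⟩
    refine ⟨?_, ?_, ?_, ?_⟩
    · intro i j h; show a.1 i j + b.1 i j = 0; rw [ha1 i j h, hb1 i j h, add_zero]
    · intro i j h; show a.2 i j + b.2 i j = 0; rw [ha2 i j h, hb2 i j h, add_zero]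
    · show (a.1 + b.1) * _ = _ * (a.2 + b.2)
      rw [Matrix.add_mul, Matrix.mul_add, ha3, hb3]
    · show (a.2 + b.2) * _ = _ * (a.1 + b.1)
      rw [Matrix.add_mul, Matrix.mul_add, ha4, hb4]
  zero_mem' := by
    refine ⟨fun _ _ _ => rfl, fun _ _ _ => rfl, ?_, ?_⟩
    · show (0 : Matrix (Fin m) (Fin m) ℂ) * _ = _ * (0 : Matrix (Fin n) (Fin n) ℂ)
      rw [Matrix.zero_mul, Matrix.mul_zero]
    · show (0 : Matrix (Fin n) (Fin n) ℂ) * _ = _ * (0 : Matrix (Fin m) (Fin m) ℂ)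
      rw [Matrix.zero_mul, Matrix.mul_zero]
  smul_mem' := by
    rintro c a ⟨ha1, ha2, ha3, ha4⟩
    refine ⟨?_, ?_, ?_, ?_⟩
    · intro i j h; show c * a.1 i j = 0; rw [ha1 i j h, mul_zero]
    · intro i j h; show c * a.2 i j = 0; rw [ha2 i j h, mul_zero]
    · show (c • a.1) * _ = _ * (c • a.2)
      rw [Matrix.smul_mul, Matrix.mul_smul, ha3]
    · show (c • a.2) * _ = _ * (c • a.1)
      rw [Matrix.smul_mul, Matrix.mul_smul, ha4]


theorem stabilizer_computation (m n : ℕ) (hm : 1 ≤ m) (hmn : m ≤ n)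
    (π : Matrix (Fin m) (Fin n) ℂ)
    (hπ01 : ∀ i j, π i j = 0 ∨ π i j = 1)
    (hπ : π * πᵀ = 1)
    (s t : Fin m → ℂ) (hs : ∀ i, s i ≠ 0) (ht : ∀ i, t i ≠ 0)
    (hdist : ∀ i i' : Fin m, i ≠ i' → s i * t i ≠ s i' * t i')
    (Am : Matrix (Fin m) (Fin m) ℂ) (An : Matrix (Fin n) (Fin n) ℂ)
    (hAm : ∀ i j : Fin m, i ≤ j → Am i j = 0)
    (hAn : ∀ i j : Fin n, j ≤ i → An i j = 0)
    (h1 : Am * (Matrix.diagonal s * π) = (Matrix.diagonal s * π) * An)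
    (h2 : An * (πᵀ * Matrix.diagonal t) = (πᵀ * Matrix.diagonal t) * Am) :
    (Am = 0 ∧ π * An = 0 ∧ An * πᵀ = 0) ∧
    Module.finrank ℂ (stabSpace m n π s t) = (n - m) * (n - m - 1) / 2 := by
  classical
  obtain ⟨c, hcinj, hcπ⟩ := perm_struct π hπ01 hπ
  have hc1 : ∀ k, π k (c k) = 1 := fun k => by rw [hcπ]; simp
  have hrow : ∀ (B : Matrix (Fin n) (Fin n) ℂ) (k : Fin m) (j : Fin n),
      (π * B) k j = B (c k) j := by
    intro B k j
    rw [Matrix.mul_apply]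
    simp [hcπ]
  have hcol : ∀ (B : Matrix (Fin n) (Fin n) ℂ) (i : Fin n) (k : Fin m),
      (B * πᵀ) i k = B i (c k) := by
    intro B i k
    rw [Matrix.mul_apply]
    simp [hcπ]
  refine ⟨stab_vanish π hπ s t hs ht hdist Am An hAm h1 h2, ?_⟩
  set Q : Fin n × Fin n → Prop :=
    fun p => (∀ k, π k p.1 = 0) ∧ (∀ k, π k p.2 = 0) ∧ p.1 < p.2 with hQ
  have memzero : ∀ A : Matrix (Fin m) (Fin m) ℂ × Matrix (Fin n) (Fin n) ℂ,
      A ∈ stabSpace m n π s t → A.1 = 0 ∧ ∀ i j : Fin n, ¬ Q (i, j) → A.2 i j = 0 := by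
    intro A hA
    have hA' : (∀ i j : Fin m, i ≤ j → A.1 i j = 0) ∧
        (∀ i j : Fin n, j ≤ i → A.2 i j = 0) ∧
        A.1 * (Matrix.diagonal s * π) = (Matrix.diagonal s * π) * A.2 ∧
        A.2 * (πᵀ * Matrix.diagonal t) = (πᵀ * Matrix.diagonal t) * A.1 := hA
    obtain ⟨hA1, hA2, hA3, hA4⟩ := hA'
    obtain ⟨hz, hpz, hcz⟩ := stab_vanish π hπ s t hs ht hdist A.1 A.2 hA1 hA3 hA4
    refine ⟨hz, ?_⟩
    intro i j hq
    by_cases hi : ∀ k, π k i = 0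
    · by_cases hj : ∀ k, π k j = 0
      · have hij : ¬ i < j := fun hlt => hq ⟨hi, hj, hlt⟩
        exact hA2 i j (le_of_not_gt hij)
      · push_neg at hj
        obtain ⟨k, hk⟩ := hj
        have hjc : j = c k := by
          by_contra hne; rw [hcπ k j, if_neg hne] at hk; exact hk rfl
        subst hjc
        have h := congrFun (congrFun hcz i) k
        rw [hcol] at h; simpa using h
    · push_neg at hi
      obtain ⟨k, hk⟩ := hi
      have hic : i = c k := by
        by_contra hne; rw [hcπ k i, if_neg hne] at hk; exact hk rfl
      subst hic
      have h := congrFun (congrFun hpz k) j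
      rw [hrow] at h; simpa using h
  have memof : ∀ B : Matrix (Fin n) (Fin n) ℂ, (∀ i j : Fin n, ¬ Q (i, j) → B i j = 0) →
      ((0, B) : Matrix (Fin m) (Fin m) ℂ × Matrix (Fin n) (Fin n) ℂ) ∈ stabSpace m n π s t := by
    intro B hB
    have hπB : π * B = 0 := by
      ext k j
      rw [hrow]
      simp only [Matrix.zero_apply]
      apply hB
      intro hq
      exact absurd (hq.1 k) (by rw [hc1 k]; exact one_ne_zero)
    have hBπ : B * πᵀ = 0 := by
      ext i k
      rw [hcol]
      simp only [Matrix.zero_apply]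
      apply hB
      intro hq
      exact absurd (hq.2.1 k) (by rw [hc1 k]; exact one_ne_zero)
    refine ⟨fun i j _ => rfl, ?_, ?_, ?_⟩
    · intro i j hij
      exact hB i j (fun hq => absurd hq.2.2 (not_lt.mpr hij))
    · show (0 : Matrix (Fin m) (Fin m) ℂ) * (Matrix.diagonal s * π)
        = (Matrix.diagonal s * π) * B
      rw [Matrix.zero_mul, Matrix.mul_assoc, hπB, Matrix.mul_zero]
    · show B * (πᵀ * Matrix.diagonal t)
        = (πᵀ * Matrix.diagonal t) * (0 : Matrix (Fin m) (Fin m) ℂ)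
      rw [Matrix.mul_zero, ← Matrix.mul_assoc, hBπ, Matrix.zero_mul]
  have hfr : Module.finrank ℂ (stabSpace m n π s t)
      = Fintype.card {p : Fin n × Fin n // Q p} := by
    have e : (stabSpace m n π s t) ≃ₗ[ℂ] ({p : Fin n × Fin n // Q p} → ℂ) :=
    { toFun := fun A p => (A : Matrix (Fin m) (Fin m) ℂ × Matrix (Fin n) (Fin n) ℂ).2 p.1.1 p.1.2
      map_add' := fun _ _ => rfl
      map_smul' := fun _ _ => rfl
      invFun := fun f => ⟨(0, fun i j => if h : Q (i, j) then f ⟨(i, j), h⟩ else 0),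
        memof _ (fun i j hq => dif_neg hq)⟩
      left_inv := fun A => by
        obtain ⟨hz, hv⟩ := memzero A.1 A.2
        apply Subtype.ext
        apply Prod.ext
        · exact hz.symm
        · funext i j
          by_cases h : Q (i, j)
          · exact dif_pos h
          · exact (dif_neg h).trans (hv i j h).symm
      right_inv := fun f => by
        funext p
        obtain ⟨⟨i, j⟩, hp⟩ := p
        exact dif_pos hp }
    rw [e.finrank_eq, Module.finrank_pi]
  rw [hfr, Fintype.card_subtype]
  set Sc : Finset (Fin n) := Finset.univ.filter (fun j => ∀ k, π k j = 0) with hSc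
  have hfilter : Finset.univ.filter Q = (Sc ×ˢ Sc).filter fun p => p.1 < p.2 := by
    ext ⟨i, j⟩
    simp only [hQ, hSc, Finset.mem_filter, Finset.mem_univ, true_and, Finset.mem_product]
    tauto
  have hScc : Sc.card = n - m := by
    have himg : Finset.univ.filter (fun j => ¬ (∀ k, π k j = 0)) = Finset.univ.image c := by
      ext j
      simp only [Finset.mem_filter, Finset.mem_univ, true_and, Finset.mem_image, not_forall]
      constructor
      · rintro ⟨k, hk⟩
        have hjc : j = c k := by
          by_contra hne; rw [hcπ k j, if_neg hne] at hk; exact hk rfl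
        exact ⟨k, hjc.symm⟩
      · rintro ⟨k, rfl⟩
        exact ⟨k, by rw [hc1 k]; exact one_ne_zero⟩
    have h : Sc.card + (Finset.univ.filter (fun j => ¬ (∀ k, π k j = 0))).card
        = (Finset.univ : Finset (Fin n)).card := by
      rw [hSc]; exact Finset.card_filter_add_card_filter_not _
    rw [himg, Finset.card_image_of_injective _ hcinj, Finset.card_univ, Fintype.card_fin,
      Finset.card_univ, Fintype.card_fin] at h
    omega
  rw [hfilter, card_lt_pairs, hScc]
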